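/- Let U_n = F_{2n} (the Lucas sequence U(3,1), satisfying U_n = 3U_{n-1} − U_{n-2}), so that ∑_{i=1}^n U_i = F_{2n+1} − 1. Then for every n ≥ 1, the largest m such that U_m divides this partial sum is m = ⌈n/2⌉: that is, F_{2⌈n/2⌉} divides F_{2n+1} − 1, and for every m > ⌈n/2⌉, F_{2m} does not divide F_{2n+1} − 1. In particular, for odd n one has m_{n-1} + 1 = m_n, so the corresponding trick works for every sequence satisfying x_j = 3x_{j-1} − x_{j-2}. -/

import Mathlib

private def dseq : ℕ → ℤ
  | 0 => 2
  | 1 => 3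
  | (t+2) => 3 * dseq (t+1) - dseq t

private def cseq : ℕ → ℤ
  | 0 => 1
  | (t+1) => cseq t + dseq (t+1)

private lemma cass (k : ℕ) :
    Nat.fib (2*k) * Nat.fib (2*k+2) + 1 = Nat.fib (2*k+1) ^ 2 := by
  induction k with
  | zero => simp
  | succ k ih =>
      have A : Nat.fib (2*(k+1)) = Nat.fib (2*k) + Nat.fib (2*k+1) := by
        rw [show 2*(k+1) = (2*k)+2 by ring, Nat.fib_add_two]
      have B : Nat.fib (2*(k+1)+1) = Nat.fib (2*k+1) + Nat.fib (2*(k+1)) := by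
        rw [show 2*(k+1)+1 = (2*k+1)+2 by ring, Nat.fib_add_two,
          show 2*k+1+1 = 2*(k+1) by ring]
      have C : Nat.fib (2*(k+1)+2) = Nat.fib (2*(k+1)) + Nat.fib (2*(k+1)+1) :=
        Nat.fib_add_two
      rw [C, B, A]
      zify
      have ihZ : ((Nat.fib (2*k) : ℤ)) * Nat.fib (2*k+2) + 1
          = (Nat.fib (2*k+1) : ℤ) ^ 2 := by exact_mod_cast ih
      have AZ : ((Nat.fib (2*k+2) : ℤ)) = Nat.fib (2*k) + Nat.fib (2*k+1) := by
        exact_mod_cast (by rw [show 2*k+2 = (2*k)+2 by ring, Nat.fib_add_two] :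
          Nat.fib (2*k+2) = Nat.fib (2*k) + Nat.fib (2*k+1))
      rw [AZ] at ihZ
      linear_combination ihZ

private lemma pair_lem (x : ℕ → ℤ)
    (hx : ∀ j, 3 ≤ j → x j = 3 * x (j - 1) - x (j - 2)) :
    ∀ t a, 1 ≤ a → x a + x (a + 2*t) = dseq t * x (a + t)
  | 0, a, _ => by simp [dseq]; ring
  | 1, a, ha => by
      have h := hx (a+2) (by omega)
      simp only [show a+2-1 = a+1 from rfl, show a+2-2 = a from rfl] at h
      simp only [dseq, show a+2*1 = a+2 from rfl]
      rw [h]; ring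
  | (t+2), a, ha => by
      have ih1 := pair_lem x hx (t+1) (a+1) (by omega)
      have ih2 := pair_lem x hx t (a+2) (by omega)
      have h4 := hx (a+2*t+4) (by omega)
      have h2 := hx (a+2) (by omega)
      simp only [show a+2*t+4-1 = a+2*t+3 from rfl, show a+2*t+4-2 = a+2*t+2 from rfl,
        show a+2-1 = a+1 from rfl, show a+2-2 = a from rfl] at h4 h2
      rw [show a + 1 + 2*(t+1) = a+2*t+3 by ring, show a + 1 + (t+1) = a + (t+2) by ring]
        at ih1
      rw [show a + 2 + 2*t = a+2*t+2 by ring, show a + 2 + t = a + (t+2) by ring] at ih2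
      rw [show a + 2*(t+2) = a+2*t+4 by ring, h4]
      simp only [dseq]
      linarith [ih1, ih2, h2]

private lemma sum_lem (x : ℕ → ℤ)
    (hx : ∀ j, 3 ≤ j → x j = 3 * x (j - 1) - x (j - 2)) :
    ∀ t a, 1 ≤ a → ∑ i ∈ Finset.range (2*t+1), x (a+i) = cseq t * x (a + t) := by
  intro t
  induction t with
  | zero => intro a ha; simp [cseq]
  | succ t ih =>
      intro a ha
      rw [show 2*(t+1)+1 = (2*t+1) + 1 + 1 by ring, Finset.sum_range_succ,
        Finset.sum_range_succ']
      have ih' := ih (a+1) (by omega)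
      have hp := pair_lem x hx (t+1) a ha
      have e1 : ∀ i, x (a + (i+1)) = x ((a+1) + i) := by
        intro i; congr 1; ring
      simp only [e1]
      rw [ih', show a + 1 + t = a + (t + 1) by ring]
      rw [show a + 2*(t+1) = a+1+(2*t+1) by ring] at hp
      simp only [cseq, add_zero]
      linear_combination hp

set_option maxHeartbeats 1600000 in
theorem fib_bisection_max_index (n : ℕ) (hn : 1 ≤ n) :
    (Nat.fib (2 * ((n + 1) / 2)) ∣ Nat.fib (2 * n + 1) - 1) ∧
    (∀ m : ℕ, (n + 1) / 2 < m → ¬ Nat.fib (2 * m) ∣ Nat.fib (2 * n + 1) - 1) ∧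
    (n % 2 = 1 → ∃ z : ℤ, ∀ x : ℕ → ℤ,
      (∀ j, 3 ≤ j → x j = 3 * x (j - 1) - x (j - 2)) →
      ∑ i ∈ Finset.Icc 1 n, x i = z * x ((n + 1) / 2)) := by
  refine ⟨?_, ?_, ?_⟩
  · -- divisibility
    rcases Nat.even_or_odd n with ⟨k, hk⟩ | ⟨k, hk⟩
    · subst hk
      have ht : (k + k + 1) / 2 = k := by omega
      rw [ht]
      have hadd := Nat.fib_add (2*k) (2*k)
      have hc := cass k
      refine ⟨Nat.fib (2*k) + Nat.fib (2*k+2), ?_⟩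
      have key : Nat.fib (2*(k+k)+1)
          = Nat.fib (2*k) * (Nat.fib (2*k) + Nat.fib (2*k+2)) + 1 := by
        rw [show 2*(k+k)+1 = 2*k + (2*k) + 1 by ring, hadd]
        zify
        have hcZ : ((Nat.fib (2*k) : ℤ)) * Nat.fib (2*k+2) + 1
            = (Nat.fib (2*k+1) : ℤ) ^ 2 := by exact_mod_cast hc
        linear_combination -hcZ
      rw [key, Nat.add_sub_cancel]
    · subst hk
      have ht : (2*k+1+1) / 2 = k + 1 := by omega
      rw [ht]
      have hadd := Nat.fib_add (2*k+1) (2*k+1)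
      have hc := cass k
      refine ⟨Nat.fib (2*k) + Nat.fib (2*k+2), ?_⟩
      have key : Nat.fib (2*(2*k+1)+1)
          = Nat.fib (2*(k+1)) * (Nat.fib (2*k) + Nat.fib (2*k+2)) + 1 := by
        rw [show 2*(2*k+1)+1 = (2*k+1) + (2*k+1) + 1 by ring, hadd,
          show 2*(k+1) = 2*k+2 by ring, show 2*k+1+1 = 2*k+2 by ring]
        zify
        have hcZ : ((Nat.fib (2*k) : ℤ)) * Nat.fib (2*k+2) + 1
            = (Nat.fib (2*k+1) : ℤ) ^ 2 := by exact_mod_cast hc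
        linear_combination -hcZ
      rw [key, Nat.add_sub_cancel]
  · -- maximality
    intro m hm hdvd
    have hm2 : 2 ≤ m := by omega
    have h2m : n + 2 ≤ 2 * m := by omega
    have hf3 : Nat.fib 3 = 2 := rfl
    have hf3le : Nat.fib 3 ≤ Nat.fib (2*n+1) := Nat.fib_mono (by omega)
    have hpos : 0 < Nat.fib (2*n+1) - 1 := by omega
    by_cases hmn : n < m
    · have hle := Nat.le_of_dvd hpos hdvd
      have h1 : Nat.fib (2*n+1) < Nat.fib (2*n+2) := Nat.fib_lt_fib_succ (by omega)
      have h2 : Nat.fib (2*n+2) ≤ Nat.fib (2*m) := Nat.fib_mono (by omega)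
      omega
    · push_neg at hmn
      set s := 2*n + 1 - 2*m with hs
      have hs1 : 1 ≤ s := by omega
      have hs3 : s ≤ 2*m - 3 := by omega
      have hadd := Nat.fib_add (2*m) (s-1)
      rw [show 2*m + (s-1) + 1 = 2*n+1 by omega, show s - 1 + 1 = s by omega] at hadd
      have hfpos : 1 ≤ Nat.fib (2*n+1) := Nat.fib_pos.mpr (by omega)
      have hdvdZ : (Nat.fib (2*m) : ℤ) ∣ (Nat.fib (2*n+1) : ℤ) - 1 := by
        have := Int.natCast_dvd_natCast.mpr hdvd
        rwa [Nat.cast_sub hfpos, Nat.cast_one] at this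
      have haddZ : (Nat.fib (2*n+1) : ℤ)
          = Nat.fib (2*m) * Nat.fib (s-1) + Nat.fib (2*m+1) * Nat.fib s := by
        exact_mod_cast hadd
      have h1 : (Nat.fib (2*m) : ℤ) ∣ (Nat.fib (2*m+1) : ℤ) * Nat.fib s - 1 := by
        have e : (Nat.fib (2*m+1) : ℤ) * Nat.fib s - 1
            = ((Nat.fib (2*n+1) : ℤ) - 1) - Nat.fib (2*m) * Nat.fib (s-1) := by
          linear_combination -haddZ
        rw [e]
        exact dvd_sub hdvdZ ⟨Nat.fib (s-1), rfl⟩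
      have hcZ : ((Nat.fib (2*m) : ℤ)) * Nat.fib (2*m+2) + 1
          = (Nat.fib (2*m+1) : ℤ) ^ 2 := by exact_mod_cast cass m
      have h2 := h1.mul_left (Nat.fib (2*m+1) : ℤ)
      have e2 : (Nat.fib (2*m+1) : ℤ) * ((Nat.fib (2*m+1) : ℤ) * Nat.fib s - 1)
          = (Nat.fib (2*m) : ℤ) * (Nat.fib (2*m+2) * Nat.fib s)
            + ((Nat.fib s : ℤ) - Nat.fib (2*m+1)) := by
        linear_combination -(Nat.fib s : ℤ) * hcZ
      rw [e2] at h2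
      have key : (Nat.fib (2*m) : ℤ) ∣ (Nat.fib (2*m+1) : ℤ) - Nat.fib s := by
        have := (dvd_add_right ⟨(Nat.fib (2*m+2) * Nat.fib s : ℤ), rfl⟩).mp h2
        have h' := this.neg_right
        rwa [neg_sub] at h'
      -- bounds
      have i1 : Nat.fib s ≤ Nat.fib (2*m-3) := Nat.fib_mono hs3
      have i2 : Nat.fib (2*m-3) < Nat.fib (2*m-1) := by
        have hA := Nat.fib_add_two (n := 2*m-3)
        rw [show 2*m-3+2 = 2*m-1 by omega, show 2*m-3+1 = 2*m-2 by omega] at hA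
        have hp2 : 0 < Nat.fib (2*m-2) := Nat.fib_pos.mpr (by omega)
        omega
      have i3 : Nat.fib (2*m+1) = Nat.fib (2*m-1) + Nat.fib (2*m) := by
        have hA := Nat.fib_add_two (n := 2*m-1)
        rw [show 2*m-1+2 = 2*m+1 by omega, show 2*m-1+1 = 2*m by omega] at hA
        exact hA
      have i4 : Nat.fib (2*m-1) ≤ Nat.fib (2*m) := Nat.fib_mono (by omega)
      have i5 : 1 ≤ Nat.fib s := Nat.fib_pos.mpr (by omega)
      obtain ⟨q, hq⟩ := key
      have hb1 : (Nat.fib (2*m) : ℤ) < Nat.fib (2*m) * q := by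
        rw [← hq]
        have : (Nat.fib s : ℤ) < Nat.fib (2*m-1) := by exact_mod_cast lt_of_le_of_lt i1 i2
        have : (Nat.fib (2*m+1) : ℤ) = Nat.fib (2*m-1) + Nat.fib (2*m) := by
          exact_mod_cast i3
        linarith
      have hb2 : (Nat.fib (2*m) : ℤ) * q < 2 * Nat.fib (2*m) := by
        rw [← hq]
        have i4' : (Nat.fib (2*m-1) : ℤ) ≤ Nat.fib (2*m) := by exact_mod_cast i4
        have i5' : (1:ℤ) ≤ Nat.fib s := by exact_mod_cast i5
        have : (Nat.fib (2*m+1) : ℤ) = Nat.fib (2*m-1) + Nat.fib (2*m) := by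
          exact_mod_cast i3
        linarith
      have hfm : (0:ℤ) < Nat.fib (2*m) := by
        exact_mod_cast Nat.fib_pos.mpr (by omega)
      have hq1 : 1 < q := by nlinarith
      have hq2 : q < 2 := by nlinarith
      omega
  · -- the trick
    intro hodd
    obtain ⟨k, hk⟩ : ∃ k, n = 2*k+1 := ⟨n/2, by omega⟩
    refine ⟨cseq k, fun x hx => ?_⟩
    rw [show Finset.Icc 1 n = Finset.Ico 1 (n+1) from (Finset.Ico_add_one_right_eq_Icc 1 n).symm,
      Finset.sum_Ico_eq_sum_range, show n + 1 - 1 = 2*k+1 by omega,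
      sum_lem x hx k 1 le_rfl, show (n+1)/2 = 1 + k by omega]
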